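/- Let A ∈ ℝ⟦X,Y⟧ be supported in R. (Every monomial of A then has X-degree ≥ 2; in particular the constant term of A vanishes, so 1 − 2A is a unit, and A = X·B for a unique B ∈ ℝ⟦X,Y⟧.) Fix an integer k ≥ 2 and let J ∈ ℝ⟦X,Y⟧ be a polynomial in Y alone, supported on exponents (0, s) with k ≤ 2s and s < k. Then the product J · X^k · (1 − 2A)^{−2k} · (1 − 2B)^k is supported in R ∩ {(i, j) ∈ ℕ² : i ≥ k}. -/

import Mathlib

/-- A two-variable formal power series is supported in `T ⊆ ℕ²` if every monomial
`X^i Y^j` with nonzero coefficient has `(i, j) ∈ T`. -/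
def SupportedIn (f : MvPowerSeries (Fin 2) ℝ) (T : Set (ℕ × ℕ)) : Prop :=
  ∀ m : Fin 2 →₀ ℕ, MvPowerSeries.coeff m f ≠ 0 → (m 0, m 1) ∈ T

/-- The region `R = {(i,j) : i ≤ 2j and j < i}`. -/
def Rset : Set (ℕ × ℕ) := {ij | ij.1 ≤ 2 * ij.2 ∧ ij.2 < ij.1}

/-- The closed cone `{(i,j) : i ≤ 2j and j ≤ i}`. -/
def C1 : Set (ℕ × ℕ) := {ij | ij.1 ≤ 2 * ij.2 ∧ ij.2 ≤ ij.1}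

lemma supportedIn_mul {f g : MvPowerSeries (Fin 2) ℝ} {S T U : Set (ℕ × ℕ)}
    (hf : SupportedIn f S) (hg : SupportedIn g T)
    (hU : ∀ s ∈ S, ∀ t ∈ T, (s.1 + t.1, s.2 + t.2) ∈ U) :
    SupportedIn (f * g) U := by
  intro m hm
  rw [MvPowerSeries.coeff_mul] at hm
  obtain ⟨p, hp, hne⟩ := Finset.exists_ne_zero_of_sum_ne_zero hm
  rw [Finset.HasAntidiagonal.mem_antidiagonal] at hp
  have h1 : MvPowerSeries.coeff p.1 f ≠ 0 := left_ne_zero_of_mul hne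
  have h2 : MvPowerSeries.coeff p.2 g ≠ 0 := right_ne_zero_of_mul hne
  have e0 : m 0 = p.1 0 + p.2 0 := by rw [← hp]; simp
  have e1 : m 1 = p.1 1 + p.2 1 := by rw [← hp]; simp
  rw [e0, e1]
  exact hU _ (hf _ h1) _ (hg _ h2)

lemma supportedIn_pow {f : MvPowerSeries (Fin 2) ℝ} {S : Set (ℕ × ℕ)}
    (h0 : (0, 0) ∈ S) (hadd : ∀ s ∈ S, ∀ t ∈ S, (s.1 + t.1, s.2 + t.2) ∈ S)
    (hf : SupportedIn f S) (n : ℕ) : SupportedIn (f ^ n) S := by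
  induction n with
  | zero =>
    intro m hm
    rw [pow_zero] at hm
    rw [MvPowerSeries.coeff_one] at hm
    have hm0 : m = 0 := by by_contra h; exact hm (if_neg h)
    simpa [hm0] using h0
  | succ n ih =>
    rw [pow_succ]
    exact supportedIn_mul ih hf hadd

lemma supportedIn_inv {f : MvPowerSeries (Fin 2) ℝ} {S : Set (ℕ × ℕ)}
    (h0 : (0, 0) ∈ S) (hadd : ∀ s ∈ S, ∀ t ∈ S, (s.1 + t.1, s.2 + t.2) ∈ S)
    (hf : SupportedIn f S) : SupportedIn f⁻¹ S := by
  suffices H : ∀ d, ∀ m : Fin 2 →₀ ℕ, m 0 + m 1 = d →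
      MvPowerSeries.coeff m f⁻¹ ≠ 0 → (m 0, m 1) ∈ S from
    fun m hm => H _ m rfl hm
  intro d
  induction d using Nat.strong_induction_on with
  | _ d ih =>
    intro m hd hm
    rw [MvPowerSeries.coeff_inv] at hm
    by_cases hm0 : m = 0
    · simpa [hm0] using h0
    · rw [if_neg hm0] at hm
      have hs : ¬ (∑ x ∈ Finset.HasAntidiagonal.antidiagonal m,
          if x.2 < m then MvPowerSeries.coeff x.1 f * MvPowerSeries.coeff x.2 f⁻¹
          else 0) = 0 := fun h => hm (by rw [h, mul_zero])
      obtain ⟨x, hx, hne⟩ := Finset.exists_ne_zero_of_sum_ne_zero hs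
      rw [Finset.HasAntidiagonal.mem_antidiagonal] at hx
      have hlt : x.2 < m := by
        by_contra h; exact hne (if_neg h)
      rw [if_pos hlt] at hne
      have h1 : MvPowerSeries.coeff x.1 f ≠ 0 := left_ne_zero_of_mul hne
      have h2 : MvPowerSeries.coeff x.2 f⁻¹ ≠ 0 := right_ne_zero_of_mul hne
      have hle : ∀ i, x.2 i ≤ m i := fun i => Finsupp.le_def.mp hlt.le i
      have hne2 : ∃ a : Fin 2, x.2 a ≠ m a := by
        by_contra hc
        push_neg at hc
        exact hlt.ne (Finsupp.ext hc)
      have hdeg : x.2 0 + x.2 1 < d := by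
        have l0 := hle 0
        have l1 := hle 1
        have hd2 : x.2 0 ≠ m 0 ∨ x.2 1 ≠ m 1 := by
          by_contra hc
          push_neg at hc
          refine hlt.ne (Finsupp.ext fun a => ?_)
          fin_cases a
          · exact hc.1
          · exact hc.2
        omega
      have hS2 := ih _ hdeg x.2 rfl h2
      have hS1 := hf _ h1
      have e0 : m 0 = x.1 0 + x.2 0 := by rw [← hx]; simp
      have e1 : m 1 = x.1 1 + x.2 1 := by rw [← hx]; simp
      rw [e0, e1]
      exact hadd _ hS1 _ hS2

lemma C1_add : ∀ s ∈ C1, ∀ t ∈ C1, (s.1 + t.1, s.2 + t.2) ∈ C1 := by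
  rintro ⟨a, b⟩ ⟨h1, h2⟩ ⟨c, d⟩ ⟨h3, h4⟩
  exact ⟨by dsimp at *; omega, by dsimp at *; omega⟩

lemma C1_zero : (0, 0) ∈ C1 := ⟨by simp [C1], by simp [C1]⟩

lemma supportedIn_one_sub_two_mul {f : MvPowerSeries (Fin 2) ℝ} {S : Set (ℕ × ℕ)}
    (h0 : (0, 0) ∈ S) (hf : SupportedIn f S) : SupportedIn (1 - 2 * f) S := by
  intro m hm
  have hcoeff : MvPowerSeries.coeff m (1 - 2 * f) =
      MvPowerSeries.coeff m 1 -
        (MvPowerSeries.coeff m f + MvPowerSeries.coeff m f) := by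
    rw [map_sub, two_mul, map_add]
  rw [hcoeff] at hm
  by_cases hmf : MvPowerSeries.coeff m f = 0
  · have hm1 : MvPowerSeries.coeff m (1 : MvPowerSeries (Fin 2) ℝ) ≠ 0 := by
      intro h; apply hm; rw [h, hmf]; ring
    rw [MvPowerSeries.coeff_one] at hm1
    have hm0 : m = 0 := by by_contra h; exact hm1 (if_neg h)
    simpa [hm0] using h0
  · exact hf _ hmf

theorem stmt7 (A B J : MvPowerSeries (Fin 2) ℝ) (k : ℕ) (hk : 2 ≤ k)
    (hA : SupportedIn A Rset)
    (hAB : A = MvPowerSeries.X 0 * B)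
    (hJ : SupportedIn J {q : ℕ × ℕ | q.1 = 0 ∧ k ≤ 2 * q.2 ∧ q.2 < k}) :
    SupportedIn
      (J * (MvPowerSeries.X 0) ^ k * ((1 - 2 * A)⁻¹) ^ (2 * k) * (1 - 2 * B) ^ k)
      (Rset ∩ {ij : ℕ × ℕ | k ≤ ij.1}) := by
  -- A is supported in C1
  have hA' : SupportedIn A C1 := fun m hm => ⟨(hA m hm).1, (hA m hm).2.le⟩
  -- B is supported in C1
  have hB : SupportedIn B C1 := by
    intro m hm
    have hcoeff : MvPowerSeries.coeff (Finsupp.single 0 1 + m) A =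
        MvPowerSeries.coeff m B := by
      rw [hAB, MvPowerSeries.X, MvPowerSeries.coeff_add_monomial_mul, one_mul]
    have hmem := hA _ (hcoeff.symm ▸ hm)
    have e0 : ((Finsupp.single (0 : Fin 2) 1 + m : Fin 2 →₀ ℕ)) 0 = 1 + m 0 := by
      simp [Finsupp.add_apply, Finsupp.single_apply]
    have e1 : ((Finsupp.single (0 : Fin 2) 1 + m : Fin 2 →₀ ℕ)) 1 = m 1 := by
      simp [Finsupp.add_apply, Finsupp.single_apply]
    rw [e0, e1] at hmem
    obtain ⟨hm1, hm2⟩ := hmem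
    exact ⟨by dsimp at *; omega, by dsimp at *; omega⟩
  -- the two big unitary factors are supported in C1
  have hInv : SupportedIn (((1 - 2 * A)⁻¹) ^ (2 * k)) C1 :=
    supportedIn_pow C1_zero C1_add
      (supportedIn_inv C1_zero C1_add (supportedIn_one_sub_two_mul C1_zero hA')) _
  have hBpow : SupportedIn ((1 - 2 * B) ^ k) C1 :=
    supportedIn_pow C1_zero C1_add (supportedIn_one_sub_two_mul C1_zero hB) _
  -- X 0 ^ k is supported at (k, 0)
  have hXk : SupportedIn ((MvPowerSeries.X 0 : MvPowerSeries (Fin 2) ℝ) ^ k)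
      {q : ℕ × ℕ | q.1 = k ∧ q.2 = 0} := by
    intro m hm
    rw [MvPowerSeries.coeff_X_pow] at hm
    have hm0 : m = Finsupp.single 0 k := by by_contra h; exact hm (if_neg h)
    subst hm0
    constructor <;> simp
  -- J * X^k supported at {(k, s) : k ≤ 2s, s < k}
  have hJX : SupportedIn (J * (MvPowerSeries.X 0) ^ k)
      {q : ℕ × ℕ | q.1 = k ∧ k ≤ 2 * q.2 ∧ q.2 < k} := by
    refine supportedIn_mul hJ hXk ?_
    rintro ⟨a, b⟩ ⟨h1, h2, h3⟩ ⟨c, d⟩ ⟨h4, h5⟩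
    refine ⟨by dsimp at *; omega, by dsimp at *; omega, by dsimp at *; omega⟩
  have step1 : SupportedIn (J * (MvPowerSeries.X 0) ^ k * ((1 - 2 * A)⁻¹) ^ (2 * k))
      {q : ℕ × ℕ | k ≤ q.1 ∧ q.1 ≤ 2 * q.2 ∧ q.2 < q.1} := by
    refine supportedIn_mul hJX hInv ?_
    rintro ⟨a, b⟩ ⟨h1, h2, h3⟩ ⟨c, d⟩ ⟨h4, h5⟩
    refine ⟨by dsimp at *; omega, by dsimp at *; omega, by dsimp at *; omega⟩
  refine supportedIn_mul step1 hBpow ?_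
  rintro ⟨a, b⟩ ⟨h1, h2, h3⟩ ⟨c, d⟩ ⟨h4, h5⟩
  exact ⟨⟨by dsimp at *; omega, by dsimp at *; omega⟩, by dsimp [Set.mem_setOf_eq] at *; omega⟩
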